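/- Let S be a semigroup, b,c ∈ S¹ with bSc = S. Then the map ρ ↦ ρ_{b,c} is an injective lattice homomorphism from the congruence lattice of S to the congruence lattice of the variant S_{cb}; in particular ρ_{b,c} = σ_{b,c} implies ρ = σ, and (ρ ∨ σ)_{b,c} = ρ_{b,c} ∨ σ_{b,c}. -/

import Mathlib

/-- Any product `x * ↑s * y` in `S¹ = WithOne S` with middle factor in `S` lies in `S`. -/
theorem exists_coe_eq {S : Type*} [Semigroup S] (x y : WithOne S) (s : S) :
    ∃ z : S, (z : WithOne S) = x * ↑s * y := by
  induction x using WithOne.recOneCoe with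
  | one => induction y using WithOne.recOneCoe with
    | one => exact ⟨s, by simp⟩
    | coe b => exact ⟨s * b, by simp⟩
  | coe a => induction y using WithOne.recOneCoe with
    | one => exact ⟨a * s, by simp⟩
    | coe b => exact ⟨a * s * b, by simp [mul_assoc]⟩

/-- The element `x s y ∈ S` for `x, y ∈ S¹`, `s ∈ S`. -/
noncomputable def sand3 {S : Type*} [Semigroup S] (x : WithOne S) (s : S) (y : WithOne S) : S :=
  (exists_coe_eq x y s).choose

theorem sand3_spec {S : Type*} [Semigroup S] (x : WithOne S) (s : S) (y : WithOne S) :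
    (↑(sand3 x s y) : WithOne S) = x * ↑s * y :=
  (exists_coe_eq x y s).choose_spec

/-- `sand b c s = b s c ∈ S` for `b, c ∈ S¹`, `s ∈ S`. -/
noncomputable def sand {S : Type*} [Semigroup S] (b c : WithOne S) (s : S) : S := sand3 b s c

/-- The join of two congruences: the transitive closure of their union. -/
def joinRel {S : Type*} (ρ σ : S → S → Prop) : S → S → Prop :=
  Relation.TransGen (fun x y => ρ x y ∨ σ x y)

/-- If `bSc = S`, then `ρ ↦ ρ_{b,c}` is an injective lattice homomorphism from the congruence
lattice of `S` to that of `S_{cb}`: it preserves meets and joins, and `ρ_{b,c} = σ_{b,c}`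
implies `ρ = σ`. -/
theorem rho_bc_injective_lattice_hom {S : Type*} [Semigroup S]
    (b c : WithOne S) (hbsc : ∀ s : S, ∃ x : S, s = sand b c x)
    (ρ σ : S → S → Prop)
    (hρequiv : Equivalence ρ)
    (hρcomp : ∀ s t u v : S, ρ s t → ρ u v → ρ (s * u) (t * v))
    (hσequiv : Equivalence σ)
    (hσcomp : ∀ s t u v : S, σ s t → σ u v → σ (s * u) (t * v)) :
    ((∀ s t : S, ρ (sand b c s) (sand b c t) ↔ σ (sand b c s) (sand b c t)) →
        ∀ s t : S, ρ s t ↔ σ s t) ∧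
    (∀ s t : S,
      (fun x y : S => ρ x y ∧ σ x y) (sand b c s) (sand b c t) ↔
        (ρ (sand b c s) (sand b c t) ∧ σ (sand b c s) (sand b c t))) ∧
    (∀ s t : S,
      joinRel ρ σ (sand b c s) (sand b c t) ↔
        joinRel (fun x y : S => ρ (sand b c x) (sand b c y))
          (fun x y : S => σ (sand b c x) (sand b c y)) s t) := by

  refine ⟨?_, fun s t => Iff.rfl, ?_⟩
  · intro h s t
    obtain ⟨x, rfl⟩ := hbsc s
    obtain ⟨y, rfl⟩ := hbsc t
    exact h x y
  · intro s t
    constructor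
    · intro h
      have key : ∀ u v : S, Relation.TransGen (fun x y => ρ x y ∨ σ x y) u v →
          ∀ s t : S, u = sand b c s → v = sand b c t →
          Relation.TransGen (fun x y : S =>
            ρ (sand b c x) (sand b c y) ∨ σ (sand b c x) (sand b c y)) s t := by
        intro u v huv
        induction huv with
        | single h1 =>
          intro s t hs ht
          exact Relation.TransGen.single (hs ▸ ht ▸ h1)
        | tail h1 h2 ih =>
          rename_i v w
          intro s t hs ht
          obtain ⟨x, hx⟩ := hbsc v
          exact Relation.TransGen.tail (ih s x hs hx) (hx ▸ ht ▸ h2)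
      exact key _ _ h s t rfl rfl
    · intro h
      induction h with
      | single h1 => exact Relation.TransGen.single h1
      | tail _ h2 ih => exact Relation.TransGen.tail ih h2
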